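/- Let A and B be unital C*-algebras and Λ : A → B a unital completely positive map. If a ∈ A satisfies Λ(a* a) = Λ(a)* Λ(a), then Λ(b a) = Λ(b) Λ(a) for all b ∈ A; similarly, if Λ(a a*) = Λ(a) Λ(a)*, then Λ(a b) = Λ(a) Λ(b) for all b ∈ A. -/

import Mathlib

open ComplexStarModule

/-- A linear map between C*-algebras is completely positive if for every `n` and all tuples
`a : Fin n → A`, `b : Fin n → B`, the element `∑ i, ∑ j, (b i)* Λ((a i)* a j) (b j)` is
positive. -/
def IsCompletelyPositive {A B : Type*} [CStarAlgebra A] [CStarAlgebra B]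
    [PartialOrder B] [StarOrderedRing B] (Λ : A →ₗ[ℂ] B) : Prop :=
  ∀ (n : ℕ) (a : Fin n → A) (b : Fin n → B),
    0 ≤ ∑ i : Fin n, ∑ j : Fin n, star (b i) * Λ (star (a i) * a j) * b j

section Aux
variable {A B : Type*} [CStarAlgebra A] [CStarAlgebra B]
    [PartialOrder A] [StarOrderedRing A] [PartialOrder B] [StarOrderedRing B]
    (Λ : A →ₗ[ℂ] B)

lemma cp_nonneg (hcp : IsCompletelyPositive Λ) (x : A) : 0 ≤ Λ (star x * x) := by
  simpa using hcp 1 ![x] ![1]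

lemma cp_map_nonneg (hcp : IsCompletelyPositive Λ) {p : A} (hp : 0 ≤ p) : 0 ≤ Λ p := by
  have h := cp_nonneg Λ hcp (CFC.sqrt p)
  rwa [(IsSelfAdjoint.of_nonneg (CFC.sqrt_nonneg p)).star_eq,
    CFC.sqrt_mul_sqrt_self p hp] at h

lemma cp_selfAdjoint (hcp : IsCompletelyPositive Λ) {h : A} (hh : IsSelfAdjoint h) :
    IsSelfAdjoint (Λ h) := by
  have : Λ h = Λ (h⁺) - Λ (h⁻) := by rw [← map_sub, CFC.posPart_sub_negPart h hh]
  rw [this]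
  exact ((cp_map_nonneg Λ hcp (CFC.posPart_nonneg h)).isSelfAdjoint).sub
    ((cp_map_nonneg Λ hcp (CFC.negPart_nonneg h)).isSelfAdjoint)

lemma cp_star (hcp : IsCompletelyPositive Λ) (x : A) : Λ (star x) = star (Λ x) := by
  have hx : x = (ℜ x : A) + Complex.I • (ℑ x : A) := (realPart_add_I_smul_imaginaryPart x).symm
  have hsx : star x = (ℜ x : A) - Complex.I • (ℑ x : A) := by
    nth_rw 1 [hx]
    rw [star_add, (ℜ x).2.star_eq, star_smul, (ℑ x).2.star_eq, Complex.star_def,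
      Complex.conj_I, neg_smul, ← sub_eq_add_neg]
  have hr := (cp_selfAdjoint Λ hcp (ℜ x).2).star_eq
  have hi := (cp_selfAdjoint Λ hcp (ℑ x).2).star_eq
  rw [hsx, map_sub, map_smul]
  conv_rhs => rw [hx]
  rw [map_add, map_smul, star_add, star_smul, Complex.star_def, Complex.conj_I, hr, hi, neg_smul,
    ← sub_eq_add_neg]

lemma cp_schwarz2 (hunital : Λ 1 = 1) (hcp : IsCompletelyPositive Λ) (x y : A) (c d : B) :
    0 ≤ star c * (Λ (star x * x) - star (Λ x) * Λ x) * c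
      + star c * (Λ (star x * y) - star (Λ x) * Λ y) * d
      + star d * (Λ (star y * x) - star (Λ y) * Λ x) * c
      + star d * (Λ (star y * y) - star (Λ y) * Λ y) * d := by
  have h := hcp 4 ![x, y, 1, 1] ![c, d, -(Λ x * c), -(Λ y * d)]
  simp only [Fin.sum_univ_four, Matrix.cons_val_zero, Matrix.cons_val_one, Matrix.head_cons,
    Matrix.cons_val_two, Matrix.tail_cons, Matrix.cons_val_three, Matrix.head_fin_const,
    star_one, one_mul, mul_one, hunital, star_neg, star_mul, cp_star Λ hcp, star_star] at h
  convert h using 1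
  noncomm_ring

lemma cp_offdiag {a : A} (hunital : Λ 1 = 1) (hcp : IsCompletelyPositive Λ)
    (haa : Λ (star a * a) = star (Λ a) * Λ a) (x : A) :
    Λ (star a * x) = star (Λ a) * Λ x := by
  rw [← sub_eq_zero]
  set u := Λ (star a * x) - star (Λ a) * Λ x with hu
  have hsu : star u = Λ (star x * a) - star (Λ x) * Λ a := by
    have h1 : Λ (star x * a) = star (Λ (star a * x)) := by
      rw [← cp_star Λ hcp]; congr 1; simp [star_mul]
    rw [hu, star_sub, ← h1, star_mul, star_star]
  have key : ∀ n : ℕ, (2 * n) • (star u * u) ≤ Λ (star x * x) - star (Λ x) * Λ x := by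
    intro n
    have h := cp_schwarz2 Λ hunital hcp a x (-(n • u)) 1
    rw [sub_eq_zero.mpr haa, ← hsu] at h
    simp only [mul_zero, zero_mul, star_neg, star_nsmul, star_one, one_mul, mul_one] at h
    rw [← sub_nonneg]
    convert h using 1
    simp only [neg_mul, mul_neg, smul_mul_assoc, mul_smul_comm]
    module
  have hD : ∀ n : ℕ, (2 * n : ℝ) * ‖star u * u‖ ≤ ‖Λ (star x * x) - star (Λ x) * Λ x‖ := by
    intro n
    have h1 : (0:B) ≤ (2 * n) • (star u * u) := nsmul_nonneg (star_mul_self_nonneg u) _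
    have h2 := CStarAlgebra.norm_le_norm_of_nonneg_of_le h1 (key n)
    rwa [← Nat.cast_smul_eq_nsmul ℝ, norm_smul, Real.norm_natCast, Nat.cast_mul, Nat.cast_ofNat] at h2
  have hzero : ‖star u * u‖ = 0 := by
    by_contra hne
    have hr : 0 < ‖star u * u‖ := lt_of_le_of_ne (norm_nonneg _) (Ne.symm hne)
    obtain ⟨n, hn⟩ := exists_nat_gt (‖Λ (star x * x) - star (Λ x) * Λ x‖ / (2 * ‖star u * u‖))
    have := hD n
    rw [div_lt_iff₀ (by positivity)] at hn
    nlinarith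
  have h0 : star u * u = 0 := norm_eq_zero.mp hzero
  exact (CStarRing.star_mul_self_eq_zero_iff u).mp h0

end Aux

/-- Choi's multiplicative domain theorem: if `Λ(a*a) = Λ(a)*Λ(a)` then
`Λ(b a) = Λ(b) Λ(a)` for all `b`; if `Λ(a a*) = Λ(a) Λ(a)*` then
`Λ(a b) = Λ(a) Λ(b)` for all `b`. -/
theorem multiplicative_domain {A B : Type*} [CStarAlgebra A] [CStarAlgebra B]
    [PartialOrder A] [StarOrderedRing A] [PartialOrder B] [StarOrderedRing B]
    (Λ : A →ₗ[ℂ] B) (hunital : Λ 1 = 1) (hcp : IsCompletelyPositive Λ) (a : A) :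
    (Λ (star a * a) = star (Λ a) * Λ a → ∀ b : A, Λ (b * a) = Λ b * Λ a) ∧
    (Λ (a * star a) = Λ a * star (Λ a) → ∀ b : A, Λ (a * b) = Λ a * Λ b) := by
  constructor
  · intro haa b
    have h := cp_offdiag Λ hunital hcp haa (star b)
    calc Λ (b * a) = star (Λ (star (b * a))) := by rw [cp_star Λ hcp, star_star]
      _ = star (Λ (star a * star b)) := by rw [star_mul]
      _ = star (star (Λ a) * Λ (star b)) := by rw [cp_offdiag Λ hunital hcp haa]
      _ = Λ b * Λ a := by rw [star_mul, star_star, ← cp_star Λ hcp, star_star]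
  · intro haa b
    have haa' : Λ (star (star a) * star a) = star (Λ (star a)) * Λ (star a) := by
      rw [star_star, cp_star Λ hcp, star_star, haa]
    have h := cp_offdiag Λ hunital hcp haa' b
    rw [star_star, cp_star Λ hcp, star_star] at h
    exact h
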